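/- (Kochen–Specker colouring impossibility in ℝ³) There is no function c : {v ∈ ℝ³ : ‖v‖ = 1} → {true, false} such that for every orthonormal basis (v₁, v₂, v₃) of ℝ³ exactly one of c(v₁), c(v₂), c(v₃) is true. -/

import Mathlib

open MeasureTheory Matrix
open scoped RealInnerProductSpace

noncomputable section

/-- ℝ³ as a Euclidean space. -/
abbrev R3 : Type := EuclideanSpace ℝ (Fin 3)

/-- The unit sphere S² ⊂ ℝ³. -/
def sphere2 : Set R3 := Metric.sphere (0 : R3) 1

/-- The surface measure on ℝ³: the 2-dimensional Hausdorff measure. Integrals over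
`sphere2` with respect to this measure realize the surface measure `dΩ` of the sphere. -/
def surfMeasure : Measure R3 := μH[2]

/-- The spin-1 matrix `S_x`. -/
def Sx : Matrix (Fin 3) (Fin 3) ℂ :=
  (Real.sqrt 2 : ℂ)⁻¹ • !![0, 1, 0; 1, 0, 1; 0, 1, 0]

/-- The spin-1 matrix `S_y`. -/
def Sy : Matrix (Fin 3) (Fin 3) ℂ :=
  (Real.sqrt 2 : ℂ)⁻¹ • !![0, -Complex.I, 0; Complex.I, 0, -Complex.I; 0, Complex.I, 0]

/-- The spin-1 matrix `S_z`. -/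
def Sz : Matrix (Fin 3) (Fin 3) ℂ := !![1, 0, 0; 0, 0, 0; 0, 0, -1]

/-- The spin-1 observable in direction `n`, `S_n = n₁ S_x + n₂ S_y + n₃ S_z`. -/
def Sdir (n : R3) : Matrix (Fin 3) (Fin 3) ℂ :=
  (n 0 : ℂ) • Sx + (n 1 : ℂ) • Sy + (n 2 : ℂ) • Sz

/-- The spectral projection of `S_n` for eigenvalue `i ∈ {1, 0, -1}`:
`P_{n,1} = (S_n² + S_n)/2`, `P_{n,0} = 1 - S_n²`, `P_{n,-1} = (S_n² - S_n)/2`. -/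
def Pproj (n : R3) (i : ℤ) : Matrix (Fin 3) (Fin 3) ℂ :=
  if i = 1 then (2 : ℂ)⁻¹ • (Sdir n ^ 2 + Sdir n)
  else if i = 0 then 1 - Sdir n ^ 2
  else if i = -1 then (2 : ℂ)⁻¹ • (Sdir n ^ 2 - Sdir n)
  else 0

/-- The unsharp spin observable `F^n(i) = ∫_{S²} w_n(m) P_{m,i} dΩ(m)`
(the matrix-valued Bochner integral, computed entrywise). -/
def Fobs (w : R3 → R3 → ℝ) (n : R3) (i : ℤ) : Matrix (Fin 3) (Fin 3) ℂ :=
  Matrix.of fun j k => ∫ m in sphere2, (w n m : ℂ) * Pproj m i j k ∂surfMeasure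

/-- `w` is a family of error densities: for each unit vector `n`, `w n` is measurable on
the sphere, nonnegative on the sphere, and integrates to 1 over the sphere. -/
def IsErrorDensityFamily (w : R3 → R3 → ℝ) : Prop :=
  ∀ n : R3, ‖n‖ = 1 →
    Measurable (sphere2.restrict (w n)) ∧
    (∀ m : R3, ‖m‖ = 1 → 0 ≤ w n m) ∧
    (∫ m in sphere2, w n m ∂surfMeasure) = 1

/-- The action of a 3×3 real matrix on ℝ³. -/
def rot (R : Matrix (Fin 3) (Fin 3) ℝ) (m : R3) : R3 :=
  (EuclideanSpace.equiv (Fin 3) ℝ).symm (R.mulVec (EuclideanSpace.equiv (Fin 3) ℝ m))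

/-- Rotation covariance of a family of error densities: `w_{Rn}(Rm) = w_n(m)` for every
rotation `R ∈ SO(3)`. -/
def IsRotationCovariant (w : R3 → R3 → ℝ) : Prop :=
  ∀ R : Matrix (Fin 3) (Fin 3) ℝ, Rᵀ * R = 1 → R.det = 1 →
    ∀ n m : R3, ‖n‖ = 1 → ‖m‖ = 1 → w (rot R n) (rot R m) = w n m

/-- The unit vector `z = (0,0,1)`. -/
def zvec : R3 := (EuclideanSpace.equiv (Fin 3) ℝ).symm ![0, 0, 1]

/-- `α₁ = 2π ∫₀^π g(θ) sin θ cos⁴(θ/2) dθ`. -/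
def alpha1 (g : ℝ → ℝ) : ℝ :=
  2 * Real.pi * ∫ θ in (0:ℝ)..Real.pi, g θ * Real.sin θ * Real.cos (θ / 2) ^ 4

/-- `α₂ = π ∫₀^π g(θ) sin θ sin²θ dθ`. -/
def alpha2 (g : ℝ → ℝ) : ℝ :=
  Real.pi * ∫ θ in (0:ℝ)..Real.pi, g θ * Real.sin θ * Real.sin θ ^ 2

/-- `α₃ = 2π ∫₀^π g(θ) sin θ sin⁴(θ/2) dθ`. -/
def alpha3 (g : ℝ → ℝ) : ℝ :=
  2 * Real.pi * ∫ θ in (0:ℝ)..Real.pi, g θ * Real.sin θ * Real.sin (θ / 2) ^ 4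

/-- `α₄ = 2π ∫₀^π g(θ) sin θ cos²θ dθ`. -/
def alpha4 (g : ℝ → ℝ) : ℝ :=
  2 * Real.pi * ∫ θ in (0:ℝ)..Real.pi, g θ * Real.sin θ * Real.cos θ ^ 2



/-! ### Auxiliary machinery for the Kochen–Specker proof (Peres' 33 rays) -/

noncomputable def KSmk3 (a b c : ℝ) : R3 := (WithLp.equiv 2 (Fin 3 → ℝ)).symm ![a,b,c]
noncomputable def KSnm (x : R3) : R3 := ‖x‖⁻¹ • x

lemma KSinner3 (a b c d e f : ℝ) : ⟪KSmk3 a b c, KSmk3 d e f⟫ = a*d + b*e + c*f := by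
  simp [KSmk3, PiLp.inner_apply, Fin.sum_univ_three, RCLike.inner_apply]
  ring

lemma KSmk3_ne0 (a b c : ℝ) (h : a ≠ 0) : KSmk3 a b c ≠ 0 := by
  intro h0
  have : KSmk3 a b c 0 = 0 := by rw [h0]; rfl
  simp [KSmk3] at this; exact h this
lemma KSmk3_ne1 (a b c : ℝ) (h : b ≠ 0) : KSmk3 a b c ≠ 0 := by
  intro h0
  have : KSmk3 a b c 1 = 0 := by rw [h0]; rfl
  simp [KSmk3] at this; exact h this
lemma KSmk3_ne2 (a b c : ℝ) (h : c ≠ 0) : KSmk3 a b c ≠ 0 := by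
  intro h0
  have : KSmk3 a b c 2 = 0 := by rw [h0]; rfl
  simp [KSmk3] at this; exact h this

lemma KSnm_inner (x y : R3) (h : ⟪x,y⟫ = 0) : ⟪KSnm x, KSnm y⟫ = 0 := by
  unfold KSnm; rw [real_inner_smul_left, real_inner_smul_right, h]; ring

lemma KSexactlyOne (c : R3 → Bool) (u v w : R3)
    (h : ∃! a : Fin 3, c (![u,v,w] a) = true) :
    ((c u && !c v && !c w) || (!c u && c v && !c w) || (!c u && !c v && c w)) = true := by
  obtain ⟨a, ha, hu⟩ := h
  have h0 : c u = true → (0 : Fin 3) = a := fun h => hu 0 h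
  have h1 : c v = true → (1 : Fin 3) = a := fun h => hu 1 h
  have h2 : c w = true → (2 : Fin 3) = a := fun h => hu 2 h
  cases hx : c u <;> cases hy : c v <;> cases hz : c w <;> simp only [Bool.and_self,
    Bool.not_true, Bool.not_false, Bool.and_true, Bool.and_false, Bool.true_and,
    Bool.false_and, Bool.or_false, Bool.false_or, Bool.or_self]
  · exfalso; fin_cases a <;> simp_all
  · exfalso; exact absurd ((h1 hy).trans (h2 hz).symm) (by decide)
  · exfalso; exact absurd ((h0 hx).trans (h2 hz).symm) (by decide)
  · exfalso; exact absurd ((h0 hx).trans (h1 hy).symm) (by decide)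
  · exfalso; exact absurd ((h0 hx).trans (h1 hy).symm) (by decide)

lemma KStripod (c : R3 → Bool)
    (hc : ∀ v : Fin 3 → R3, (∀ a, ‖v a‖ = 1) → (∀ a b, a ≠ b → ⟪v a, v b⟫ = 0) →
      ∃! a, c (v a) = true)
    (x y z : R3) (hx : x ≠ 0) (hy : y ≠ 0) (hz : z ≠ 0)
    (hxy : ⟪x,y⟫ = 0) (hxz : ⟪x,z⟫ = 0) (hyz : ⟪y,z⟫ = 0) :
    ((c (KSnm x) && !c (KSnm y) && !c (KSnm z)) || (!c (KSnm x) && c (KSnm y) && !c (KSnm z)) ||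
      (!c (KSnm x) && !c (KSnm y) && c (KSnm z))) = true := by
  refine KSexactlyOne c _ _ _ (hc ![KSnm x, KSnm y, KSnm z] ?_ ?_)
  · intro a
    fin_cases a
    · exact norm_smul_inv_norm hx
    · exact norm_smul_inv_norm hy
    · exact norm_smul_inv_norm hz
  · intro a b hab
    fin_cases a <;> fin_cases b
    · exact absurd rfl hab
    · exact KSnm_inner _ _ hxy
    · exact KSnm_inner _ _ hxz
    · rw [real_inner_comm]
      exact KSnm_inner _ _ hxy
    · exact absurd rfl hab
    · exact KSnm_inner _ _ hyz
    · rw [real_inner_comm]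
      exact KSnm_inner _ _ hxz
    · rw [real_inner_comm]
      exact KSnm_inner _ _ hyz
    · exact absurd rfl hab

lemma KSboolPair : ∀ x y z : Bool,
    ((x && !y && !z) || (!x && y && !z) || (!x && !y && z)) = true → (x && y) = false := by
  decide

lemma KSs2l : (1.41 : ℝ) < Real.sqrt 2 := by
  nlinarith [Real.sq_sqrt (by norm_num : (0:ℝ) ≤ 2), Real.sqrt_nonneg 2]
lemma KSs2u : Real.sqrt 2 < 1.42 := by
  nlinarith [Real.sq_sqrt (by norm_num : (0:ℝ) ≤ 2), Real.sqrt_nonneg 2]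
lemma KShs2 : Real.sqrt 2 * Real.sqrt 2 = 2 := Real.mul_self_sqrt (by norm_num)

noncomputable def KSv0 : R3 := KSmk3 (0 : ℝ) (0 : ℝ) (1 : ℝ)
lemma KSn_KSv0 : KSv0 ≠ 0 := KSmk3_ne2 _ _ _ (by intro h; nlinarith [KSs2l, KSs2u])
noncomputable def KSv1 : R3 := KSmk3 (0 : ℝ) ((1 : ℝ) * Real.sqrt 2) (-1 : ℝ)
lemma KSn_KSv1 : KSv1 ≠ 0 := KSmk3_ne1 _ _ _ (by intro h; nlinarith [KSs2l, KSs2u])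
noncomputable def KSv2 : R3 := KSmk3 (0 : ℝ) ((1 : ℝ) * Real.sqrt 2) (1 : ℝ)
lemma KSn_KSv2 : KSv2 ≠ 0 := KSmk3_ne1 _ _ _ (by intro h; nlinarith [KSs2l, KSs2u])
noncomputable def KSv3 : R3 := KSmk3 (0 : ℝ) (1 : ℝ) (-1 : ℝ)
lemma KSn_KSv3 : KSv3 ≠ 0 := KSmk3_ne1 _ _ _ (by intro h; nlinarith [KSs2l, KSs2u])
noncomputable def KSv4 : R3 := KSmk3 (0 : ℝ) (1 : ℝ) ((-1 : ℝ) * Real.sqrt 2)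
lemma KSn_KSv4 : KSv4 ≠ 0 := KSmk3_ne2 _ _ _ (by intro h; nlinarith [KSs2l, KSs2u])
noncomputable def KSv5 : R3 := KSmk3 (0 : ℝ) (1 : ℝ) (0 : ℝ)
lemma KSn_KSv5 : KSv5 ≠ 0 := KSmk3_ne1 _ _ _ (by intro h; nlinarith [KSs2l, KSs2u])
noncomputable def KSv6 : R3 := KSmk3 (0 : ℝ) (1 : ℝ) ((1 : ℝ) * Real.sqrt 2)
lemma KSn_KSv6 : KSv6 ≠ 0 := KSmk3_ne2 _ _ _ (by intro h; nlinarith [KSs2l, KSs2u])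
noncomputable def KSv7 : R3 := KSmk3 (0 : ℝ) (1 : ℝ) (1 : ℝ)
lemma KSn_KSv7 : KSv7 ≠ 0 := KSmk3_ne1 _ _ _ (by intro h; nlinarith [KSs2l, KSs2u])
noncomputable def KSv8 : R3 := KSmk3 ((1 : ℝ) * Real.sqrt 2) (-1 : ℝ) (-1 : ℝ)
lemma KSn_KSv8 : KSv8 ≠ 0 := KSmk3_ne0 _ _ _ (by intro h; nlinarith [KSs2l, KSs2u])
noncomputable def KSv9 : R3 := KSmk3 ((1 : ℝ) * Real.sqrt 2) (-1 : ℝ) (0 : ℝ)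
lemma KSn_KSv9 : KSv9 ≠ 0 := KSmk3_ne0 _ _ _ (by intro h; nlinarith [KSs2l, KSs2u])
noncomputable def KSv10 : R3 := KSmk3 ((1 : ℝ) * Real.sqrt 2) (-1 : ℝ) (1 : ℝ)
lemma KSn_KSv10 : KSv10 ≠ 0 := KSmk3_ne0 _ _ _ (by intro h; nlinarith [KSs2l, KSs2u])
noncomputable def KSv11 : R3 := KSmk3 ((1 : ℝ) * Real.sqrt 2) (0 : ℝ) (-1 : ℝ)
lemma KSn_KSv11 : KSv11 ≠ 0 := KSmk3_ne0 _ _ _ (by intro h; nlinarith [KSs2l, KSs2u])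
noncomputable def KSv12 : R3 := KSmk3 ((1 : ℝ) * Real.sqrt 2) (0 : ℝ) (1 : ℝ)
lemma KSn_KSv12 : KSv12 ≠ 0 := KSmk3_ne0 _ _ _ (by intro h; nlinarith [KSs2l, KSs2u])
noncomputable def KSv13 : R3 := KSmk3 ((1 : ℝ) * Real.sqrt 2) (1 : ℝ) (-1 : ℝ)
lemma KSn_KSv13 : KSv13 ≠ 0 := KSmk3_ne0 _ _ _ (by intro h; nlinarith [KSs2l, KSs2u])
noncomputable def KSv14 : R3 := KSmk3 ((1 : ℝ) * Real.sqrt 2) (1 : ℝ) (0 : ℝ)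
lemma KSn_KSv14 : KSv14 ≠ 0 := KSmk3_ne0 _ _ _ (by intro h; nlinarith [KSs2l, KSs2u])
noncomputable def KSv15 : R3 := KSmk3 ((1 : ℝ) * Real.sqrt 2) (1 : ℝ) (1 : ℝ)
lemma KSn_KSv15 : KSv15 ≠ 0 := KSmk3_ne0 _ _ _ (by intro h; nlinarith [KSs2l, KSs2u])
noncomputable def KSv16 : R3 := KSmk3 (1 : ℝ) (-1 : ℝ) ((-1 : ℝ) * Real.sqrt 2)
lemma KSn_KSv16 : KSv16 ≠ 0 := KSmk3_ne2 _ _ _ (by intro h; nlinarith [KSs2l, KSs2u])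
noncomputable def KSv17 : R3 := KSmk3 (1 : ℝ) (-1 : ℝ) (0 : ℝ)
lemma KSn_KSv17 : KSv17 ≠ 0 := KSmk3_ne0 _ _ _ (by intro h; nlinarith [KSs2l, KSs2u])
noncomputable def KSv18 : R3 := KSmk3 (1 : ℝ) (-1 : ℝ) ((1 : ℝ) * Real.sqrt 2)
lemma KSn_KSv18 : KSv18 ≠ 0 := KSmk3_ne2 _ _ _ (by intro h; nlinarith [KSs2l, KSs2u])
noncomputable def KSv19 : R3 := KSmk3 (1 : ℝ) ((-1 : ℝ) * Real.sqrt 2) (-1 : ℝ)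
lemma KSn_KSv19 : KSv19 ≠ 0 := KSmk3_ne1 _ _ _ (by intro h; nlinarith [KSs2l, KSs2u])
noncomputable def KSv20 : R3 := KSmk3 (1 : ℝ) ((-1 : ℝ) * Real.sqrt 2) (0 : ℝ)
lemma KSn_KSv20 : KSv20 ≠ 0 := KSmk3_ne1 _ _ _ (by intro h; nlinarith [KSs2l, KSs2u])
noncomputable def KSv21 : R3 := KSmk3 (1 : ℝ) ((-1 : ℝ) * Real.sqrt 2) (1 : ℝ)
lemma KSn_KSv21 : KSv21 ≠ 0 := KSmk3_ne1 _ _ _ (by intro h; nlinarith [KSs2l, KSs2u])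
noncomputable def KSv22 : R3 := KSmk3 (1 : ℝ) (0 : ℝ) (-1 : ℝ)
lemma KSn_KSv22 : KSv22 ≠ 0 := KSmk3_ne0 _ _ _ (by intro h; nlinarith [KSs2l, KSs2u])
noncomputable def KSv23 : R3 := KSmk3 (1 : ℝ) (0 : ℝ) ((-1 : ℝ) * Real.sqrt 2)
lemma KSn_KSv23 : KSv23 ≠ 0 := KSmk3_ne2 _ _ _ (by intro h; nlinarith [KSs2l, KSs2u])
noncomputable def KSv24 : R3 := KSmk3 (1 : ℝ) (0 : ℝ) (0 : ℝ)
lemma KSn_KSv24 : KSv24 ≠ 0 := KSmk3_ne0 _ _ _ (by intro h; nlinarith [KSs2l, KSs2u])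
noncomputable def KSv25 : R3 := KSmk3 (1 : ℝ) (0 : ℝ) ((1 : ℝ) * Real.sqrt 2)
lemma KSn_KSv25 : KSv25 ≠ 0 := KSmk3_ne2 _ _ _ (by intro h; nlinarith [KSs2l, KSs2u])
noncomputable def KSv26 : R3 := KSmk3 (1 : ℝ) (0 : ℝ) (1 : ℝ)
lemma KSn_KSv26 : KSv26 ≠ 0 := KSmk3_ne0 _ _ _ (by intro h; nlinarith [KSs2l, KSs2u])
noncomputable def KSv27 : R3 := KSmk3 (1 : ℝ) ((1 : ℝ) * Real.sqrt 2) (-1 : ℝ)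
lemma KSn_KSv27 : KSv27 ≠ 0 := KSmk3_ne1 _ _ _ (by intro h; nlinarith [KSs2l, KSs2u])
noncomputable def KSv28 : R3 := KSmk3 (1 : ℝ) ((1 : ℝ) * Real.sqrt 2) (0 : ℝ)
lemma KSn_KSv28 : KSv28 ≠ 0 := KSmk3_ne1 _ _ _ (by intro h; nlinarith [KSs2l, KSs2u])
noncomputable def KSv29 : R3 := KSmk3 (1 : ℝ) ((1 : ℝ) * Real.sqrt 2) (1 : ℝ)
lemma KSn_KSv29 : KSv29 ≠ 0 := KSmk3_ne1 _ _ _ (by intro h; nlinarith [KSs2l, KSs2u])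
noncomputable def KSv30 : R3 := KSmk3 (1 : ℝ) (1 : ℝ) ((-1 : ℝ) * Real.sqrt 2)
lemma KSn_KSv30 : KSv30 ≠ 0 := KSmk3_ne2 _ _ _ (by intro h; nlinarith [KSs2l, KSs2u])
noncomputable def KSv31 : R3 := KSmk3 (1 : ℝ) (1 : ℝ) (0 : ℝ)
lemma KSn_KSv31 : KSv31 ≠ 0 := KSmk3_ne0 _ _ _ (by intro h; nlinarith [KSs2l, KSs2u])
noncomputable def KSv32 : R3 := KSmk3 (1 : ℝ) (1 : ℝ) ((1 : ℝ) * Real.sqrt 2)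
lemma KSn_KSv32 : KSv32 ≠ 0 := KSmk3_ne2 _ _ _ (by intro h; nlinarith [KSs2l, KSs2u])
noncomputable def KSw0 : R3 := KSmk3 (-3 : ℝ) (-1 : ℝ) ((-1 : ℝ) * Real.sqrt 2)
lemma KSn_KSw0 : KSw0 ≠ 0 := KSmk3_ne0 _ _ _ (by intro h; nlinarith [KSs2l, KSs2u])
noncomputable def KSw1 : R3 := KSmk3 (3 : ℝ) (-1 : ℝ) ((-1 : ℝ) * Real.sqrt 2)
lemma KSn_KSw1 : KSw1 ≠ 0 := KSmk3_ne0 _ _ _ (by intro h; nlinarith [KSs2l, KSs2u])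
noncomputable def KSw2 : R3 := KSmk3 (3 : ℝ) (1 : ℝ) ((-1 : ℝ) * Real.sqrt 2)
lemma KSn_KSw2 : KSw2 ≠ 0 := KSmk3_ne0 _ _ _ (by intro h; nlinarith [KSs2l, KSs2u])
noncomputable def KSw3 : R3 := KSmk3 (-3 : ℝ) (1 : ℝ) ((-1 : ℝ) * Real.sqrt 2)
lemma KSn_KSw3 : KSw3 ≠ 0 := KSmk3_ne0 _ _ _ (by intro h; nlinarith [KSs2l, KSs2u])
noncomputable def KSw4 : R3 := KSmk3 (-3 : ℝ) ((-1 : ℝ) * Real.sqrt 2) (-1 : ℝ)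
lemma KSn_KSw4 : KSw4 ≠ 0 := KSmk3_ne0 _ _ _ (by intro h; nlinarith [KSs2l, KSs2u])
noncomputable def KSw5 : R3 := KSmk3 (3 : ℝ) ((-1 : ℝ) * Real.sqrt 2) (-1 : ℝ)
lemma KSn_KSw5 : KSw5 ≠ 0 := KSmk3_ne0 _ _ _ (by intro h; nlinarith [KSs2l, KSs2u])
noncomputable def KSw6 : R3 := KSmk3 (3 : ℝ) ((1 : ℝ) * Real.sqrt 2) (-1 : ℝ)
lemma KSn_KSw6 : KSw6 ≠ 0 := KSmk3_ne0 _ _ _ (by intro h; nlinarith [KSs2l, KSs2u])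
noncomputable def KSw7 : R3 := KSmk3 (-3 : ℝ) ((1 : ℝ) * Real.sqrt 2) (-1 : ℝ)
lemma KSn_KSw7 : KSw7 ≠ 0 := KSmk3_ne0 _ _ _ (by intro h; nlinarith [KSs2l, KSs2u])
noncomputable def KSw8 : R3 := KSmk3 ((-1 : ℝ) * Real.sqrt 2) (-3 : ℝ) (1 : ℝ)
lemma KSn_KSw8 : KSw8 ≠ 0 := KSmk3_ne1 _ _ _ (by intro h; nlinarith [KSs2l, KSs2u])
noncomputable def KSw9 : R3 := KSmk3 ((1 : ℝ) * Real.sqrt 2) (-1 : ℝ) (3 : ℝ)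
lemma KSn_KSw9 : KSw9 ≠ 0 := KSmk3_ne2 _ _ _ (by intro h; nlinarith [KSs2l, KSs2u])
noncomputable def KSw10 : R3 := KSmk3 (1 : ℝ) ((1 : ℝ) * Real.sqrt 2) (3 : ℝ)
lemma KSn_KSw10 : KSw10 ≠ 0 := KSmk3_ne2 _ _ _ (by intro h; nlinarith [KSs2l, KSs2u])
noncomputable def KSw11 : R3 := KSmk3 (-1 : ℝ) ((-1 : ℝ) * Real.sqrt 2) (3 : ℝ)
lemma KSn_KSw11 : KSw11 ≠ 0 := KSmk3_ne2 _ _ _ (by intro h; nlinarith [KSs2l, KSs2u])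
noncomputable def KSw12 : R3 := KSmk3 ((1 : ℝ) * Real.sqrt 2) (3 : ℝ) (1 : ℝ)
lemma KSn_KSw12 : KSw12 ≠ 0 := KSmk3_ne1 _ _ _ (by intro h; nlinarith [KSs2l, KSs2u])
noncomputable def KSw13 : R3 := KSmk3 ((-1 : ℝ) * Real.sqrt 2) (1 : ℝ) (3 : ℝ)
lemma KSn_KSw13 : KSw13 ≠ 0 := KSmk3_ne2 _ _ _ (by intro h; nlinarith [KSs2l, KSs2u])
noncomputable def KSw14 : R3 := KSmk3 (-1 : ℝ) (-3 : ℝ) ((-1 : ℝ) * Real.sqrt 2)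
lemma KSn_KSw14 : KSw14 ≠ 0 := KSmk3_ne1 _ _ _ (by intro h; nlinarith [KSs2l, KSs2u])
noncomputable def KSw15 : R3 := KSmk3 (1 : ℝ) (-3 : ℝ) ((1 : ℝ) * Real.sqrt 2)
lemma KSn_KSw15 : KSw15 ≠ 0 := KSmk3_ne1 _ _ _ (by intro h; nlinarith [KSs2l, KSs2u])
noncomputable def KSw16 : R3 := KSmk3 (1 : ℝ) (3 : ℝ) ((-1 : ℝ) * Real.sqrt 2)
lemma KSn_KSw16 : KSw16 ≠ 0 := KSmk3_ne1 _ _ _ (by intro h; nlinarith [KSs2l, KSs2u])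
noncomputable def KSw17 : R3 := KSmk3 (-1 : ℝ) (3 : ℝ) ((1 : ℝ) * Real.sqrt 2)
lemma KSn_KSw17 : KSw17 ≠ 0 := KSmk3_ne1 _ _ _ (by intro h; nlinarith [KSs2l, KSs2u])
noncomputable def KSw18 : R3 := KSmk3 ((-1 : ℝ) * Real.sqrt 2) (-1 : ℝ) (-3 : ℝ)
lemma KSn_KSw18 : KSw18 ≠ 0 := KSmk3_ne2 _ _ _ (by intro h; nlinarith [KSs2l, KSs2u])
noncomputable def KSw19 : R3 := KSmk3 ((1 : ℝ) * Real.sqrt 2) (-3 : ℝ) (-1 : ℝ)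
lemma KSn_KSw19 : KSw19 ≠ 0 := KSmk3_ne1 _ _ _ (by intro h; nlinarith [KSs2l, KSs2u])
noncomputable def KSw20 : R3 := KSmk3 (-1 : ℝ) ((1 : ℝ) * Real.sqrt 2) (-3 : ℝ)
lemma KSn_KSw20 : KSw20 ≠ 0 := KSmk3_ne2 _ _ _ (by intro h; nlinarith [KSs2l, KSs2u])
noncomputable def KSw21 : R3 := KSmk3 (1 : ℝ) ((-1 : ℝ) * Real.sqrt 2) (-3 : ℝ)
lemma KSn_KSw21 : KSw21 ≠ 0 := KSmk3_ne2 _ _ _ (by intro h; nlinarith [KSs2l, KSs2u])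
noncomputable def KSw22 : R3 := KSmk3 ((1 : ℝ) * Real.sqrt 2) (1 : ℝ) (-3 : ℝ)
lemma KSn_KSw22 : KSw22 ≠ 0 := KSmk3_ne2 _ _ _ (by intro h; nlinarith [KSs2l, KSs2u])
noncomputable def KSw23 : R3 := KSmk3 ((-1 : ℝ) * Real.sqrt 2) (3 : ℝ) (-1 : ℝ)
lemma KSn_KSw23 : KSw23 ≠ 0 := KSmk3_ne1 _ _ _ (by intro h; nlinarith [KSs2l, KSs2u])
lemma KSo_KSv0_KSv5 : ⟪KSv0, KSv5⟫ = 0 := by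
  rw [KSv0, KSv5, KSinner3]; linear_combination (0 : ℝ) * KShs2
lemma KSo_KSv0_KSv24 : ⟪KSv0, KSv24⟫ = 0 := by
  rw [KSv0, KSv24, KSinner3]; linear_combination (0 : ℝ) * KShs2
lemma KSo_KSv5_KSv24 : ⟪KSv5, KSv24⟫ = 0 := by
  rw [KSv5, KSv24, KSinner3]; linear_combination (0 : ℝ) * KShs2
lemma KSo_KSv0_KSv9 : ⟪KSv0, KSv9⟫ = 0 := by
  rw [KSv0, KSv9, KSinner3]; linear_combination (0 : ℝ) * KShs2
lemma KSo_KSv0_KSv28 : ⟪KSv0, KSv28⟫ = 0 := by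
  rw [KSv0, KSv28, KSinner3]; linear_combination (0 : ℝ) * KShs2
lemma KSo_KSv9_KSv28 : ⟪KSv9, KSv28⟫ = 0 := by
  rw [KSv9, KSv28, KSinner3]; linear_combination (0 : ℝ) * KShs2
lemma KSo_KSv0_KSv14 : ⟪KSv0, KSv14⟫ = 0 := by
  rw [KSv0, KSv14, KSinner3]; linear_combination (0 : ℝ) * KShs2
lemma KSo_KSv0_KSv20 : ⟪KSv0, KSv20⟫ = 0 := by
  rw [KSv0, KSv20, KSinner3]; linear_combination (0 : ℝ) * KShs2
lemma KSo_KSv14_KSv20 : ⟪KSv14, KSv20⟫ = 0 := by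
  rw [KSv14, KSv20, KSinner3]; linear_combination (0 : ℝ) * KShs2
lemma KSo_KSv0_KSv17 : ⟪KSv0, KSv17⟫ = 0 := by
  rw [KSv0, KSv17, KSinner3]; linear_combination (0 : ℝ) * KShs2
lemma KSo_KSv0_KSv31 : ⟪KSv0, KSv31⟫ = 0 := by
  rw [KSv0, KSv31, KSinner3]; linear_combination (0 : ℝ) * KShs2
lemma KSo_KSv17_KSv31 : ⟪KSv17, KSv31⟫ = 0 := by
  rw [KSv17, KSv31, KSinner3]; linear_combination (0 : ℝ) * KShs2
lemma KSo_KSv1_KSv6 : ⟪KSv1, KSv6⟫ = 0 := by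
  rw [KSv1, KSv6, KSinner3]; linear_combination (0 : ℝ) * KShs2
lemma KSo_KSv1_KSv24 : ⟪KSv1, KSv24⟫ = 0 := by
  rw [KSv1, KSv24, KSinner3]; linear_combination (0 : ℝ) * KShs2
lemma KSo_KSv6_KSv24 : ⟪KSv6, KSv24⟫ = 0 := by
  rw [KSv6, KSv24, KSinner3]; linear_combination (0 : ℝ) * KShs2
lemma KSo_KSv2_KSv4 : ⟪KSv2, KSv4⟫ = 0 := by
  rw [KSv2, KSv4, KSinner3]; linear_combination (0 : ℝ) * KShs2
lemma KSo_KSv2_KSv24 : ⟪KSv2, KSv24⟫ = 0 := by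
  rw [KSv2, KSv24, KSinner3]; linear_combination (0 : ℝ) * KShs2
lemma KSo_KSv4_KSv24 : ⟪KSv4, KSv24⟫ = 0 := by
  rw [KSv4, KSv24, KSinner3]; linear_combination (0 : ℝ) * KShs2
lemma KSo_KSv3_KSv7 : ⟪KSv3, KSv7⟫ = 0 := by
  rw [KSv3, KSv7, KSinner3]; linear_combination (0 : ℝ) * KShs2
lemma KSo_KSv3_KSv24 : ⟪KSv3, KSv24⟫ = 0 := by
  rw [KSv3, KSv24, KSinner3]; linear_combination (0 : ℝ) * KShs2
lemma KSo_KSv7_KSv24 : ⟪KSv7, KSv24⟫ = 0 := by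
  rw [KSv7, KSv24, KSinner3]; linear_combination (0 : ℝ) * KShs2
lemma KSo_KSv3_KSv8 : ⟪KSv3, KSv8⟫ = 0 := by
  rw [KSv3, KSv8, KSinner3]; linear_combination (0 : ℝ) * KShs2
lemma KSo_KSv3_KSv15 : ⟪KSv3, KSv15⟫ = 0 := by
  rw [KSv3, KSv15, KSinner3]; linear_combination (0 : ℝ) * KShs2
lemma KSo_KSv8_KSv15 : ⟪KSv8, KSv15⟫ = 0 := by
  rw [KSv8, KSv15, KSinner3]; linear_combination (1 : ℝ) * KShs2
lemma KSo_KSv5_KSv11 : ⟪KSv5, KSv11⟫ = 0 := by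
  rw [KSv5, KSv11, KSinner3]; linear_combination (0 : ℝ) * KShs2
lemma KSo_KSv5_KSv25 : ⟪KSv5, KSv25⟫ = 0 := by
  rw [KSv5, KSv25, KSinner3]; linear_combination (0 : ℝ) * KShs2
lemma KSo_KSv11_KSv25 : ⟪KSv11, KSv25⟫ = 0 := by
  rw [KSv11, KSv25, KSinner3]; linear_combination (0 : ℝ) * KShs2
lemma KSo_KSv5_KSv12 : ⟪KSv5, KSv12⟫ = 0 := by
  rw [KSv5, KSv12, KSinner3]; linear_combination (0 : ℝ) * KShs2
lemma KSo_KSv5_KSv23 : ⟪KSv5, KSv23⟫ = 0 := by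
  rw [KSv5, KSv23, KSinner3]; linear_combination (0 : ℝ) * KShs2
lemma KSo_KSv12_KSv23 : ⟪KSv12, KSv23⟫ = 0 := by
  rw [KSv12, KSv23, KSinner3]; linear_combination (0 : ℝ) * KShs2
lemma KSo_KSv5_KSv22 : ⟪KSv5, KSv22⟫ = 0 := by
  rw [KSv5, KSv22, KSinner3]; linear_combination (0 : ℝ) * KShs2
lemma KSo_KSv5_KSv26 : ⟪KSv5, KSv26⟫ = 0 := by
  rw [KSv5, KSv26, KSinner3]; linear_combination (0 : ℝ) * KShs2
lemma KSo_KSv22_KSv26 : ⟪KSv22, KSv26⟫ = 0 := by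
  rw [KSv22, KSv26, KSinner3]; linear_combination (0 : ℝ) * KShs2
lemma KSo_KSv7_KSv10 : ⟪KSv7, KSv10⟫ = 0 := by
  rw [KSv7, KSv10, KSinner3]; linear_combination (0 : ℝ) * KShs2
lemma KSo_KSv7_KSv13 : ⟪KSv7, KSv13⟫ = 0 := by
  rw [KSv7, KSv13, KSinner3]; linear_combination (0 : ℝ) * KShs2
lemma KSo_KSv10_KSv13 : ⟪KSv10, KSv13⟫ = 0 := by
  rw [KSv10, KSv13, KSinner3]; linear_combination (1 : ℝ) * KShs2
lemma KSo_KSv16_KSv18 : ⟪KSv16, KSv18⟫ = 0 := by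
  rw [KSv16, KSv18, KSinner3]; linear_combination (-1 : ℝ) * KShs2
lemma KSo_KSv16_KSv31 : ⟪KSv16, KSv31⟫ = 0 := by
  rw [KSv16, KSv31, KSinner3]; linear_combination (0 : ℝ) * KShs2
lemma KSo_KSv18_KSv31 : ⟪KSv18, KSv31⟫ = 0 := by
  rw [KSv18, KSv31, KSinner3]; linear_combination (0 : ℝ) * KShs2
lemma KSo_KSv17_KSv30 : ⟪KSv17, KSv30⟫ = 0 := by
  rw [KSv17, KSv30, KSinner3]; linear_combination (0 : ℝ) * KShs2
lemma KSo_KSv17_KSv32 : ⟪KSv17, KSv32⟫ = 0 := by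
  rw [KSv17, KSv32, KSinner3]; linear_combination (0 : ℝ) * KShs2
lemma KSo_KSv30_KSv32 : ⟪KSv30, KSv32⟫ = 0 := by
  rw [KSv30, KSv32, KSinner3]; linear_combination (-1 : ℝ) * KShs2
lemma KSo_KSv19_KSv26 : ⟪KSv19, KSv26⟫ = 0 := by
  rw [KSv19, KSv26, KSinner3]; linear_combination (0 : ℝ) * KShs2
lemma KSo_KSv19_KSv27 : ⟪KSv19, KSv27⟫ = 0 := by
  rw [KSv19, KSv27, KSinner3]; linear_combination (-1 : ℝ) * KShs2
lemma KSo_KSv26_KSv27 : ⟪KSv26, KSv27⟫ = 0 := by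
  rw [KSv26, KSv27, KSinner3]; linear_combination (0 : ℝ) * KShs2
lemma KSo_KSv21_KSv22 : ⟪KSv21, KSv22⟫ = 0 := by
  rw [KSv21, KSv22, KSinner3]; linear_combination (0 : ℝ) * KShs2
lemma KSo_KSv21_KSv29 : ⟪KSv21, KSv29⟫ = 0 := by
  rw [KSv21, KSv29, KSinner3]; linear_combination (-1 : ℝ) * KShs2
lemma KSo_KSv22_KSv29 : ⟪KSv22, KSv29⟫ = 0 := by
  rw [KSv22, KSv29, KSinner3]; linear_combination (0 : ℝ) * KShs2
lemma KSo_KSv1_KSv16 : ⟪KSv1, KSv16⟫ = 0 := by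
  rw [KSv1, KSv16, KSinner3]; linear_combination (0 : ℝ) * KShs2
lemma KSo_KSv1_KSw0 : ⟪KSv1, KSw0⟫ = 0 := by
  rw [KSv1, KSw0, KSinner3]; linear_combination (0 : ℝ) * KShs2
lemma KSo_KSv16_KSw0 : ⟪KSv16, KSw0⟫ = 0 := by
  rw [KSv16, KSw0, KSinner3]; linear_combination (1 : ℝ) * KShs2
lemma KSo_KSv1_KSv32 : ⟪KSv1, KSv32⟫ = 0 := by
  rw [KSv1, KSv32, KSinner3]; linear_combination (0 : ℝ) * KShs2
lemma KSo_KSv1_KSw1 : ⟪KSv1, KSw1⟫ = 0 := by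
  rw [KSv1, KSw1, KSinner3]; linear_combination (0 : ℝ) * KShs2
lemma KSo_KSv32_KSw1 : ⟪KSv32, KSw1⟫ = 0 := by
  rw [KSv32, KSw1, KSinner3]; linear_combination (-1 : ℝ) * KShs2
lemma KSo_KSv2_KSv18 : ⟪KSv2, KSv18⟫ = 0 := by
  rw [KSv2, KSv18, KSinner3]; linear_combination (0 : ℝ) * KShs2
lemma KSo_KSv2_KSw2 : ⟪KSv2, KSw2⟫ = 0 := by
  rw [KSv2, KSw2, KSinner3]; linear_combination (0 : ℝ) * KShs2
lemma KSo_KSv18_KSw2 : ⟪KSv18, KSw2⟫ = 0 := by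
  rw [KSv18, KSw2, KSinner3]; linear_combination (-1 : ℝ) * KShs2
lemma KSo_KSv2_KSv30 : ⟪KSv2, KSv30⟫ = 0 := by
  rw [KSv2, KSv30, KSinner3]; linear_combination (0 : ℝ) * KShs2
lemma KSo_KSv2_KSw3 : ⟪KSv2, KSw3⟫ = 0 := by
  rw [KSv2, KSw3, KSinner3]; linear_combination (0 : ℝ) * KShs2
lemma KSo_KSv30_KSw3 : ⟪KSv30, KSw3⟫ = 0 := by
  rw [KSv30, KSw3, KSinner3]; linear_combination (1 : ℝ) * KShs2
lemma KSo_KSv4_KSv19 : ⟪KSv4, KSv19⟫ = 0 := by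
  rw [KSv4, KSv19, KSinner3]; linear_combination (0 : ℝ) * KShs2
lemma KSo_KSv4_KSw4 : ⟪KSv4, KSw4⟫ = 0 := by
  rw [KSv4, KSw4, KSinner3]; linear_combination (0 : ℝ) * KShs2
lemma KSo_KSv19_KSw4 : ⟪KSv19, KSw4⟫ = 0 := by
  rw [KSv19, KSw4, KSinner3]; linear_combination (1 : ℝ) * KShs2
lemma KSo_KSv4_KSv29 : ⟪KSv4, KSv29⟫ = 0 := by
  rw [KSv4, KSv29, KSinner3]; linear_combination (0 : ℝ) * KShs2
lemma KSo_KSv4_KSw5 : ⟪KSv4, KSw5⟫ = 0 := by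
  rw [KSv4, KSw5, KSinner3]; linear_combination (0 : ℝ) * KShs2
lemma KSo_KSv29_KSw5 : ⟪KSv29, KSw5⟫ = 0 := by
  rw [KSv29, KSw5, KSinner3]; linear_combination (-1 : ℝ) * KShs2
lemma KSo_KSv6_KSv21 : ⟪KSv6, KSv21⟫ = 0 := by
  rw [KSv6, KSv21, KSinner3]; linear_combination (0 : ℝ) * KShs2
lemma KSo_KSv6_KSw6 : ⟪KSv6, KSw6⟫ = 0 := by
  rw [KSv6, KSw6, KSinner3]; linear_combination (0 : ℝ) * KShs2
lemma KSo_KSv21_KSw6 : ⟪KSv21, KSw6⟫ = 0 := by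
  rw [KSv21, KSw6, KSinner3]; linear_combination (-1 : ℝ) * KShs2
lemma KSo_KSv6_KSv27 : ⟪KSv6, KSv27⟫ = 0 := by
  rw [KSv6, KSv27, KSinner3]; linear_combination (0 : ℝ) * KShs2
lemma KSo_KSv6_KSw7 : ⟪KSv6, KSw7⟫ = 0 := by
  rw [KSv6, KSw7, KSinner3]; linear_combination (0 : ℝ) * KShs2
lemma KSo_KSv27_KSw7 : ⟪KSv27, KSw7⟫ = 0 := by
  rw [KSv27, KSw7, KSinner3]; linear_combination (1 : ℝ) * KShs2
lemma KSo_KSv8_KSv25 : ⟪KSv8, KSv25⟫ = 0 := by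
  rw [KSv8, KSv25, KSinner3]; linear_combination (0 : ℝ) * KShs2
lemma KSo_KSv8_KSw8 : ⟪KSv8, KSw8⟫ = 0 := by
  rw [KSv8, KSw8, KSinner3]; linear_combination (-1 : ℝ) * KShs2
lemma KSo_KSv25_KSw8 : ⟪KSv25, KSw8⟫ = 0 := by
  rw [KSv25, KSw8, KSinner3]; linear_combination (0 : ℝ) * KShs2
lemma KSo_KSv8_KSv28 : ⟪KSv8, KSv28⟫ = 0 := by
  rw [KSv8, KSv28, KSinner3]; linear_combination (0 : ℝ) * KShs2
lemma KSo_KSv8_KSw9 : ⟪KSv8, KSw9⟫ = 0 := by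
  rw [KSv8, KSw9, KSinner3]; linear_combination (1 : ℝ) * KShs2
lemma KSo_KSv28_KSw9 : ⟪KSv28, KSw9⟫ = 0 := by
  rw [KSv28, KSw9, KSinner3]; linear_combination (0 : ℝ) * KShs2
lemma KSo_KSv9_KSv27 : ⟪KSv9, KSv27⟫ = 0 := by
  rw [KSv9, KSv27, KSinner3]; linear_combination (0 : ℝ) * KShs2
lemma KSo_KSv9_KSw10 : ⟪KSv9, KSw10⟫ = 0 := by
  rw [KSv9, KSw10, KSinner3]; linear_combination (0 : ℝ) * KShs2
lemma KSo_KSv27_KSw10 : ⟪KSv27, KSw10⟫ = 0 := by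
  rw [KSv27, KSw10, KSinner3]; linear_combination (1 : ℝ) * KShs2
lemma KSo_KSv9_KSv29 : ⟪KSv9, KSv29⟫ = 0 := by
  rw [KSv9, KSv29, KSinner3]; linear_combination (0 : ℝ) * KShs2
lemma KSo_KSv9_KSw11 : ⟪KSv9, KSw11⟫ = 0 := by
  rw [KSv9, KSw11, KSinner3]; linear_combination (0 : ℝ) * KShs2
lemma KSo_KSv29_KSw11 : ⟪KSv29, KSw11⟫ = 0 := by
  rw [KSv29, KSw11, KSinner3]; linear_combination (-1 : ℝ) * KShs2
lemma KSo_KSv10_KSv23 : ⟪KSv10, KSv23⟫ = 0 := by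
  rw [KSv10, KSv23, KSinner3]; linear_combination (0 : ℝ) * KShs2
lemma KSo_KSv10_KSw12 : ⟪KSv10, KSw12⟫ = 0 := by
  rw [KSv10, KSw12, KSinner3]; linear_combination (1 : ℝ) * KShs2
lemma KSo_KSv23_KSw12 : ⟪KSv23, KSw12⟫ = 0 := by
  rw [KSv23, KSw12, KSinner3]; linear_combination (0 : ℝ) * KShs2
lemma KSo_KSv10_KSv28 : ⟪KSv10, KSv28⟫ = 0 := by
  rw [KSv10, KSv28, KSinner3]; linear_combination (0 : ℝ) * KShs2
lemma KSo_KSv10_KSw13 : ⟪KSv10, KSw13⟫ = 0 := by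
  rw [KSv10, KSw13, KSinner3]; linear_combination (-1 : ℝ) * KShs2
lemma KSo_KSv28_KSw13 : ⟪KSv28, KSw13⟫ = 0 := by
  rw [KSv28, KSw13, KSinner3]; linear_combination (0 : ℝ) * KShs2
lemma KSo_KSv11_KSv18 : ⟪KSv11, KSv18⟫ = 0 := by
  rw [KSv11, KSv18, KSinner3]; linear_combination (0 : ℝ) * KShs2
lemma KSo_KSv11_KSw14 : ⟪KSv11, KSw14⟫ = 0 := by
  rw [KSv11, KSw14, KSinner3]; linear_combination (0 : ℝ) * KShs2
lemma KSo_KSv18_KSw14 : ⟪KSv18, KSw14⟫ = 0 := by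
  rw [KSv18, KSw14, KSinner3]; linear_combination (-1 : ℝ) * KShs2
lemma KSo_KSv11_KSv32 : ⟪KSv11, KSv32⟫ = 0 := by
  rw [KSv11, KSv32, KSinner3]; linear_combination (0 : ℝ) * KShs2
lemma KSo_KSv11_KSw15 : ⟪KSv11, KSw15⟫ = 0 := by
  rw [KSv11, KSw15, KSinner3]; linear_combination (0 : ℝ) * KShs2
lemma KSo_KSv32_KSw15 : ⟪KSv32, KSw15⟫ = 0 := by
  rw [KSv32, KSw15, KSinner3]; linear_combination (1 : ℝ) * KShs2
lemma KSo_KSv12_KSv16 : ⟪KSv12, KSv16⟫ = 0 := by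
  rw [KSv12, KSv16, KSinner3]; linear_combination (0 : ℝ) * KShs2
lemma KSo_KSv12_KSw16 : ⟪KSv12, KSw16⟫ = 0 := by
  rw [KSv12, KSw16, KSinner3]; linear_combination (0 : ℝ) * KShs2
lemma KSo_KSv16_KSw16 : ⟪KSv16, KSw16⟫ = 0 := by
  rw [KSv16, KSw16, KSinner3]; linear_combination (1 : ℝ) * KShs2
lemma KSo_KSv12_KSv30 : ⟪KSv12, KSv30⟫ = 0 := by
  rw [KSv12, KSv30, KSinner3]; linear_combination (0 : ℝ) * KShs2
lemma KSo_KSv12_KSw17 : ⟪KSv12, KSw17⟫ = 0 := by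
  rw [KSv12, KSw17, KSinner3]; linear_combination (0 : ℝ) * KShs2
lemma KSo_KSv30_KSw17 : ⟪KSv30, KSw17⟫ = 0 := by
  rw [KSv30, KSw17, KSinner3]; linear_combination (-1 : ℝ) * KShs2
lemma KSo_KSv13_KSv20 : ⟪KSv13, KSv20⟫ = 0 := by
  rw [KSv13, KSv20, KSinner3]; linear_combination (0 : ℝ) * KShs2
lemma KSo_KSv13_KSw18 : ⟪KSv13, KSw18⟫ = 0 := by
  rw [KSv13, KSw18, KSinner3]; linear_combination (-1 : ℝ) * KShs2
lemma KSo_KSv20_KSw18 : ⟪KSv20, KSw18⟫ = 0 := by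
  rw [KSv20, KSw18, KSinner3]; linear_combination (0 : ℝ) * KShs2
lemma KSo_KSv13_KSv25 : ⟪KSv13, KSv25⟫ = 0 := by
  rw [KSv13, KSv25, KSinner3]; linear_combination (0 : ℝ) * KShs2
lemma KSo_KSv13_KSw19 : ⟪KSv13, KSw19⟫ = 0 := by
  rw [KSv13, KSw19, KSinner3]; linear_combination (1 : ℝ) * KShs2
lemma KSo_KSv25_KSw19 : ⟪KSv25, KSw19⟫ = 0 := by
  rw [KSv25, KSw19, KSinner3]; linear_combination (0 : ℝ) * KShs2
lemma KSo_KSv14_KSv19 : ⟪KSv14, KSv19⟫ = 0 := by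
  rw [KSv14, KSv19, KSinner3]; linear_combination (0 : ℝ) * KShs2
lemma KSo_KSv14_KSw20 : ⟪KSv14, KSw20⟫ = 0 := by
  rw [KSv14, KSw20, KSinner3]; linear_combination (0 : ℝ) * KShs2
lemma KSo_KSv19_KSw20 : ⟪KSv19, KSw20⟫ = 0 := by
  rw [KSv19, KSw20, KSinner3]; linear_combination (-1 : ℝ) * KShs2
lemma KSo_KSv14_KSv21 : ⟪KSv14, KSv21⟫ = 0 := by
  rw [KSv14, KSv21, KSinner3]; linear_combination (0 : ℝ) * KShs2
lemma KSo_KSv14_KSw21 : ⟪KSv14, KSw21⟫ = 0 := by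
  rw [KSv14, KSw21, KSinner3]; linear_combination (0 : ℝ) * KShs2
lemma KSo_KSv21_KSw21 : ⟪KSv21, KSw21⟫ = 0 := by
  rw [KSv21, KSw21, KSinner3]; linear_combination (1 : ℝ) * KShs2
lemma KSo_KSv15_KSv20 : ⟪KSv15, KSv20⟫ = 0 := by
  rw [KSv15, KSv20, KSinner3]; linear_combination (0 : ℝ) * KShs2
lemma KSo_KSv15_KSw22 : ⟪KSv15, KSw22⟫ = 0 := by
  rw [KSv15, KSw22, KSinner3]; linear_combination (1 : ℝ) * KShs2
lemma KSo_KSv20_KSw22 : ⟪KSv20, KSw22⟫ = 0 := by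
  rw [KSv20, KSw22, KSinner3]; linear_combination (0 : ℝ) * KShs2
lemma KSo_KSv15_KSv23 : ⟪KSv15, KSv23⟫ = 0 := by
  rw [KSv15, KSv23, KSinner3]; linear_combination (0 : ℝ) * KShs2
lemma KSo_KSv15_KSw23 : ⟪KSv15, KSw23⟫ = 0 := by
  rw [KSv15, KSw23, KSinner3]; linear_combination (-1 : ℝ) * KShs2
lemma KSo_KSv23_KSw23 : ⟪KSv23, KSw23⟫ = 0 := by
  rw [KSv23, KSw23, KSinner3]; linear_combination (0 : ℝ) * KShs2

set_option maxRecDepth 100000 in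
set_option maxHeartbeats 2000000 in
set_option synthInstance.maxHeartbeats 2000000 in
set_option synthInstance.maxSize 4000 in
lemma ksBool :
    ∀ x0 : Bool, ∀ x5 : Bool, ∀ x24 : Bool, ((x0 && !x5 && !x24) || (!x0 && x5 && !x24) || (!x0 && !x5 && x24)) = true → ∀ x1 : Bool, ∀ x6 : Bool, ((x1 && !x6 && !x24) || (!x1 && x6 && !x24) || (!x1 && !x6 && x24)) = true → ∀ x16 : Bool, (x1 && x16) = false → ∀ x12 : Bool, (x12 && x16) = false → ∀ x21 : Bool, (x6 && x21) = false → ∀ x14 : Bool, (x14 && x21) = false → ∀ x19 : Bool, (x14 && x19) = false → ∀ x4 : Bool, (x4 && x19) = false → ∀ x2 : Bool, ((x2 && !x4 && !x24) || (!x2 && x4 && !x24) || (!x2 && !x4 && x24)) = true → ∀ x30 : Bool, (x2 && x30) = false → (x12 && x30) = false → ∀ x18 : Bool, (x2 && x18) = false → ∀ x11 : Bool, (x11 && x18) = false → ∀ x32 : Bool, (x1 && x32) = false → (x11 && x32) = false → ∀ x20 : Bool, ((x0 && !x14 && !x20) || (!x0 && x14 && !x20) || (!x0 && !x14 && x20))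 = true → ∀ x13 : Bool, (x13 && x20) = false → ∀ x25 : Bool, ((x5 && !x11 && !x25) || (!x5 && x11 && !x25) || (!x5 && !x11 && x25)) = true → (x13 && x25) = false → ∀ x8 : Bool, (x8 && x25) = false → ∀ x15 : Bool, (x15 && x20) = false → ∀ x23 : Bool, ((x5 && !x12 && !x23) || (!x5 && x12 && !x23) || (!x5 && !x12 && x23)) = true → (x15 && x23) = false → ∀ x10 : Bool, (x10 && x23) = false → ∀ x28 : Bool, (x8 && x28) = false → (x10 && x28) = false → ∀ x9 : Bool, ((x0 && !x9 && !x28) || (!x0 && x9 && !x28) || (!x0 && !x9 && x28)) = true → ∀ x27 : Bool, (x6 && x27) = false → (x9 && x27) = false → ∀ x29 : Bool, (x4 && x29) = false → (x9 && x29) = false → ∀ x3 : Bool, ((x3 && !x8 && !x15) || (!x3 && x8 && !x15) || (!x3 && !x8 && x15)) = true → ∀ x7 : Bool, ((x3 && !x7 && !x24) || (!x3 && x7 && !x24) || (!x3 && !x7 && x24)) = true → ((x7 && !x10 && !x13) || (!x7 && x10 && !x13) || (!x7 && !x10 && x13)) = true → ∀ x17 : Bool, ((x17 && !x30 && !x32)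 || (!x17 && x30 && !x32) || (!x17 && !x30 && x32)) = true → ∀ x31 : Bool, ((x0 && !x17 && !x31) || (!x0 && x17 && !x31) || (!x0 && !x17 && x31)) = true → ((x16 && !x18 && !x31) || (!x16 && x18 && !x31) || (!x16 && !x18 && x31)) = true → ∀ x22 : Bool, ((x21 && !x22 && !x29) || (!x21 && x22 && !x29) || (!x21 && !x22 && x29)) = true → ∀ x26 : Bool, ((x5 && !x22 && !x26) || (!x5 && x22 && !x26) || (!x5 && !x22 && x26)) = true → ((x19 && !x26 && !x27) || (!x19 && x26 && !x27) || (!x19 && !x26 && x27)) = true → False := by decide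

/-- Kochen–Specker colouring impossibility in ℝ³: There is no
true/false colouring of the unit vectors of ℝ³ such that every orthonormal basis
(orthogonal tripod) of ℝ³ contains exactly one true vector. -/
theorem kochen_specker_no_colouring :
    ¬ ∃ c : R3 → Bool,
      ∀ v : Fin 3 → R3, (∀ a, ‖v a‖ = 1) →
        (∀ a b, a ≠ b → ⟪v a, v b⟫ = 0) →
        ∃! a, c (v a) = true := by
  rintro ⟨c, hc⟩
  have KT0 := KStripod c hc KSv0 KSv5 KSv24 KSn_KSv0 KSn_KSv5 KSn_KSv24 KSo_KSv0_KSv5 KSo_KSv0_KSv24 KSo_KSv5_KSv24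
  have KT1 := KStripod c hc KSv0 KSv9 KSv28 KSn_KSv0 KSn_KSv9 KSn_KSv28 KSo_KSv0_KSv9 KSo_KSv0_KSv28 KSo_KSv9_KSv28
  have KT2 := KStripod c hc KSv0 KSv14 KSv20 KSn_KSv0 KSn_KSv14 KSn_KSv20 KSo_KSv0_KSv14 KSo_KSv0_KSv20 KSo_KSv14_KSv20
  have KT3 := KStripod c hc KSv0 KSv17 KSv31 KSn_KSv0 KSn_KSv17 KSn_KSv31 KSo_KSv0_KSv17 KSo_KSv0_KSv31 KSo_KSv17_KSv31
  have KT4 := KStripod c hc KSv1 KSv6 KSv24 KSn_KSv1 KSn_KSv6 KSn_KSv24 KSo_KSv1_KSv6 KSo_KSv1_KSv24 KSo_KSv6_KSv24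
  have KT5 := KStripod c hc KSv2 KSv4 KSv24 KSn_KSv2 KSn_KSv4 KSn_KSv24 KSo_KSv2_KSv4 KSo_KSv2_KSv24 KSo_KSv4_KSv24
  have KT6 := KStripod c hc KSv3 KSv7 KSv24 KSn_KSv3 KSn_KSv7 KSn_KSv24 KSo_KSv3_KSv7 KSo_KSv3_KSv24 KSo_KSv7_KSv24
  have KT7 := KStripod c hc KSv3 KSv8 KSv15 KSn_KSv3 KSn_KSv8 KSn_KSv15 KSo_KSv3_KSv8 KSo_KSv3_KSv15 KSo_KSv8_KSv15
  have KT8 := KStripod c hc KSv5 KSv11 KSv25 KSn_KSv5 KSn_KSv11 KSn_KSv25 KSo_KSv5_KSv11 KSo_KSv5_KSv25 KSo_KSv11_KSv25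
  have KT9 := KStripod c hc KSv5 KSv12 KSv23 KSn_KSv5 KSn_KSv12 KSn_KSv23 KSo_KSv5_KSv12 KSo_KSv5_KSv23 KSo_KSv12_KSv23
  have KT10 := KStripod c hc KSv5 KSv22 KSv26 KSn_KSv5 KSn_KSv22 KSn_KSv26 KSo_KSv5_KSv22 KSo_KSv5_KSv26 KSo_KSv22_KSv26
  have KT11 := KStripod c hc KSv7 KSv10 KSv13 KSn_KSv7 KSn_KSv10 KSn_KSv13 KSo_KSv7_KSv10 KSo_KSv7_KSv13 KSo_KSv10_KSv13
  have KT12 := KStripod c hc KSv16 KSv18 KSv31 KSn_KSv16 KSn_KSv18 KSn_KSv31 KSo_KSv16_KSv18 KSo_KSv16_KSv31 KSo_KSv18_KSv31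
  have KT13 := KStripod c hc KSv17 KSv30 KSv32 KSn_KSv17 KSn_KSv30 KSn_KSv32 KSo_KSv17_KSv30 KSo_KSv17_KSv32 KSo_KSv30_KSv32
  have KT14 := KStripod c hc KSv19 KSv26 KSv27 KSn_KSv19 KSn_KSv26 KSn_KSv27 KSo_KSv19_KSv26 KSo_KSv19_KSv27 KSo_KSv26_KSv27
  have KT15 := KStripod c hc KSv21 KSv22 KSv29 KSn_KSv21 KSn_KSv22 KSn_KSv29 KSo_KSv21_KSv22 KSo_KSv21_KSv29 KSo_KSv22_KSv29
  have KP0 := KSboolPair _ _ _ (KStripod c hc KSv1 KSv16 KSw0 KSn_KSv1 KSn_KSv16 KSn_KSw0 KSo_KSv1_KSv16 KSo_KSv1_KSw0 KSo_KSv16_KSw0)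
  have KP1 := KSboolPair _ _ _ (KStripod c hc KSv1 KSv32 KSw1 KSn_KSv1 KSn_KSv32 KSn_KSw1 KSo_KSv1_KSv32 KSo_KSv1_KSw1 KSo_KSv32_KSw1)
  have KP2 := KSboolPair _ _ _ (KStripod c hc KSv2 KSv18 KSw2 KSn_KSv2 KSn_KSv18 KSn_KSw2 KSo_KSv2_KSv18 KSo_KSv2_KSw2 KSo_KSv18_KSw2)
  have KP3 := KSboolPair _ _ _ (KStripod c hc KSv2 KSv30 KSw3 KSn_KSv2 KSn_KSv30 KSn_KSw3 KSo_KSv2_KSv30 KSo_KSv2_KSw3 KSo_KSv30_KSw3)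
  have KP4 := KSboolPair _ _ _ (KStripod c hc KSv4 KSv19 KSw4 KSn_KSv4 KSn_KSv19 KSn_KSw4 KSo_KSv4_KSv19 KSo_KSv4_KSw4 KSo_KSv19_KSw4)
  have KP5 := KSboolPair _ _ _ (KStripod c hc KSv4 KSv29 KSw5 KSn_KSv4 KSn_KSv29 KSn_KSw5 KSo_KSv4_KSv29 KSo_KSv4_KSw5 KSo_KSv29_KSw5)
  have KP6 := KSboolPair _ _ _ (KStripod c hc KSv6 KSv21 KSw6 KSn_KSv6 KSn_KSv21 KSn_KSw6 KSo_KSv6_KSv21 KSo_KSv6_KSw6 KSo_KSv21_KSw6)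
  have KP7 := KSboolPair _ _ _ (KStripod c hc KSv6 KSv27 KSw7 KSn_KSv6 KSn_KSv27 KSn_KSw7 KSo_KSv6_KSv27 KSo_KSv6_KSw7 KSo_KSv27_KSw7)
  have KP8 := KSboolPair _ _ _ (KStripod c hc KSv8 KSv25 KSw8 KSn_KSv8 KSn_KSv25 KSn_KSw8 KSo_KSv8_KSv25 KSo_KSv8_KSw8 KSo_KSv25_KSw8)
  have KP9 := KSboolPair _ _ _ (KStripod c hc KSv8 KSv28 KSw9 KSn_KSv8 KSn_KSv28 KSn_KSw9 KSo_KSv8_KSv28 KSo_KSv8_KSw9 KSo_KSv28_KSw9)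
  have KP10 := KSboolPair _ _ _ (KStripod c hc KSv9 KSv27 KSw10 KSn_KSv9 KSn_KSv27 KSn_KSw10 KSo_KSv9_KSv27 KSo_KSv9_KSw10 KSo_KSv27_KSw10)
  have KP11 := KSboolPair _ _ _ (KStripod c hc KSv9 KSv29 KSw11 KSn_KSv9 KSn_KSv29 KSn_KSw11 KSo_KSv9_KSv29 KSo_KSv9_KSw11 KSo_KSv29_KSw11)
  have KP12 := KSboolPair _ _ _ (KStripod c hc KSv10 KSv23 KSw12 KSn_KSv10 KSn_KSv23 KSn_KSw12 KSo_KSv10_KSv23 KSo_KSv10_KSw12 KSo_KSv23_KSw12)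
  have KP13 := KSboolPair _ _ _ (KStripod c hc KSv10 KSv28 KSw13 KSn_KSv10 KSn_KSv28 KSn_KSw13 KSo_KSv10_KSv28 KSo_KSv10_KSw13 KSo_KSv28_KSw13)
  have KP14 := KSboolPair _ _ _ (KStripod c hc KSv11 KSv18 KSw14 KSn_KSv11 KSn_KSv18 KSn_KSw14 KSo_KSv11_KSv18 KSo_KSv11_KSw14 KSo_KSv18_KSw14)
  have KP15 := KSboolPair _ _ _ (KStripod c hc KSv11 KSv32 KSw15 KSn_KSv11 KSn_KSv32 KSn_KSw15 KSo_KSv11_KSv32 KSo_KSv11_KSw15 KSo_KSv32_KSw15)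
  have KP16 := KSboolPair _ _ _ (KStripod c hc KSv12 KSv16 KSw16 KSn_KSv12 KSn_KSv16 KSn_KSw16 KSo_KSv12_KSv16 KSo_KSv12_KSw16 KSo_KSv16_KSw16)
  have KP17 := KSboolPair _ _ _ (KStripod c hc KSv12 KSv30 KSw17 KSn_KSv12 KSn_KSv30 KSn_KSw17 KSo_KSv12_KSv30 KSo_KSv12_KSw17 KSo_KSv30_KSw17)
  have KP18 := KSboolPair _ _ _ (KStripod c hc KSv13 KSv20 KSw18 KSn_KSv13 KSn_KSv20 KSn_KSw18 KSo_KSv13_KSv20 KSo_KSv13_KSw18 KSo_KSv20_KSw18)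
  have KP19 := KSboolPair _ _ _ (KStripod c hc KSv13 KSv25 KSw19 KSn_KSv13 KSn_KSv25 KSn_KSw19 KSo_KSv13_KSv25 KSo_KSv13_KSw19 KSo_KSv25_KSw19)
  have KP20 := KSboolPair _ _ _ (KStripod c hc KSv14 KSv19 KSw20 KSn_KSv14 KSn_KSv19 KSn_KSw20 KSo_KSv14_KSv19 KSo_KSv14_KSw20 KSo_KSv19_KSw20)
  have KP21 := KSboolPair _ _ _ (KStripod c hc KSv14 KSv21 KSw21 KSn_KSv14 KSn_KSv21 KSn_KSw21 KSo_KSv14_KSv21 KSo_KSv14_KSw21 KSo_KSv21_KSw21)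
  have KP22 := KSboolPair _ _ _ (KStripod c hc KSv15 KSv20 KSw22 KSn_KSv15 KSn_KSv20 KSn_KSw22 KSo_KSv15_KSv20 KSo_KSv15_KSw22 KSo_KSv20_KSw22)
  have KP23 := KSboolPair _ _ _ (KStripod c hc KSv15 KSv23 KSw23 KSn_KSv15 KSn_KSv23 KSn_KSw23 KSo_KSv15_KSv23 KSo_KSv15_KSw23 KSo_KSv23_KSw23)
  exact ksBool (c (KSnm KSv0)) (c (KSnm KSv5)) (c (KSnm KSv24)) KT0 (c (KSnm KSv1)) (c (KSnm KSv6)) KT4 (c (KSnm KSv16)) KP0 (c (KSnm KSv12)) KP16 (c (KSnm KSv21)) KP6 (c (KSnm KSv14)) KP21 (c (KSnm KSv19)) KP20 (c (KSnm KSv4)) KP4 (c (KSnm KSv2)) KT5 (c (KSnm KSv30)) KP3 KP17 (c (KSnm KSv18)) KP2 (c (KSnm KSv11)) KP14 (c (KSnm KSv32)) KP1 KP15 (c (KSnm KSv20)) KT2 (c (KSnm KSv13)) KP18 (c (KSnm KSv25)) KT8 KP19 (c (KSnm KSv8)) KP8 (c (KSnm KSv15)) KP22 (c (KSnm KSv23))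 KT9 KP23 (c (KSnm KSv10)) KP12 (c (KSnm KSv28)) KP9 KP13 (c (KSnm KSv9)) KT1 (c (KSnm KSv27)) KP7 KP10 (c (KSnm KSv29)) KP5 KP11 (c (KSnm KSv3)) KT7 (c (KSnm KSv7)) KT6 KT11 (c (KSnm KSv17)) KT13 (c (KSnm KSv31)) KT3 KT12 (c (KSnm KSv22)) KT15 (c (KSnm KSv26)) KT10 KT14


end
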